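/- arXiv:1203.3715 — 3 statements merged into one kernel-verified Lean document; each statement's English description precedes it below -/
import Mathlib

section
/- Let g be in Monge form with k₁ ≠ k₂. The origin is a red sub-parabolic point, i.e. v₂κ₁(0,0) = 0 where v₂ is the unit principal vector field with v₂(0) = ∂/∂v, if and only if a₂₁ = 0. -/
noncomputable section

/-- Partial derivative in the first variable. -/
def pdu (f : ℝ × ℝ → ℝ) (p : ℝ × ℝ) : ℝ := fderiv ℝ f p (1, 0)

/-- Partial derivative in the second variable. -/
def pdv (f : ℝ × ℝ → ℝ) (p : ℝ × ℝ) : ℝ := fderiv ℝ f p (0, 1)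

/-- Coefficient `E` of the first fundamental form of the Monge surface `(u,v,f(u,v))`. -/
def Ee (f : ℝ × ℝ → ℝ) (p : ℝ × ℝ) : ℝ := 1 + (pdu f p) ^ 2

/-- Coefficient `F` of the first fundamental form. -/
def Ff (f : ℝ × ℝ → ℝ) (p : ℝ × ℝ) : ℝ := pdu f p * pdv f p

/-- Coefficient `G` of the first fundamental form. -/
def Gg (f : ℝ × ℝ → ℝ) (p : ℝ × ℝ) : ℝ := 1 + (pdv f p) ^ 2

/-- Coefficient `L` of the second fundamental form. -/
def Ll (f : ℝ × ℝ → ℝ) (p : ℝ × ℝ) : ℝ :=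
  pdu (pdu f) p / Real.sqrt (1 + (pdu f p) ^ 2 + (pdv f p) ^ 2)

/-- Coefficient `M` of the second fundamental form. -/
def Mm (f : ℝ × ℝ → ℝ) (p : ℝ × ℝ) : ℝ :=
  pdv (pdu f) p / Real.sqrt (1 + (pdu f p) ^ 2 + (pdv f p) ^ 2)

/-- Coefficient `N` of the second fundamental form. -/
def Nn (f : ℝ × ℝ → ℝ) (p : ℝ × ℝ) : ℝ :=
  pdv (pdv f) p / Real.sqrt (1 + (pdu f p) ^ 2 + (pdv f p) ^ 2)

/-- `κ p` is a principal curvature of the Monge surface `(u,v,f(u,v))` at `p`: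
it is a root of the characteristic equation
`(EG-F²)κ² - (EN-2FM+GL)κ + (LN-M²) = 0`. -/
def IsPrincipalCurvature (f : ℝ × ℝ → ℝ) (κ : ℝ × ℝ → ℝ) (p : ℝ × ℝ) : Prop :=
  (Ee f p * Gg f p - Ff f p ^ 2) * κ p ^ 2
    - (Ee f p * Nn f p - 2 * Ff f p * Mm f p + Gg f p * Ll f p) * κ p
    + (Ll f p * Nn f p - Mm f p ^ 2) = 0

/-- `w` is a unit principal vector field for the principal curvature function `κ`:
`II·w = κ I·w` and `w` has unit length with respect to the first fundamental form. -/
def IsPrincipalField (f : ℝ × ℝ → ℝ) (κ : ℝ × ℝ → ℝ) (w : ℝ × ℝ → ℝ × ℝ)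
    (p : ℝ × ℝ) : Prop :=
  Ll f p * (w p).1 + Mm f p * (w p).2 = κ p * (Ee f p * (w p).1 + Ff f p * (w p).2) ∧
  Mm f p * (w p).1 + Nn f p * (w p).2 = κ p * (Ff f p * (w p).1 + Gg f p * (w p).2) ∧
  Ee f p * (w p).1 ^ 2 + 2 * Ff f p * (w p).1 * (w p).2 + Gg f p * (w p).2 ^ 2 = 1

/-- Directional derivative of a function along a vector field. -/
def dirDeriv (w : ℝ × ℝ → ℝ × ℝ) (h : ℝ × ℝ → ℝ) (p : ℝ × ℝ) : ℝ :=
  fderiv ℝ h p (w p)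

lemma contDiff_pdu {f : ℝ × ℝ → ℝ} (hf : ContDiff ℝ (⊤ : ℕ∞) f) :
    ContDiff ℝ (⊤ : ℕ∞) (pdu f) :=
  (hf.fderiv_right (by exact_mod_cast le_top)).clm_apply contDiff_const

lemma contDiff_pdv {f : ℝ × ℝ → ℝ} (hf : ContDiff ℝ (⊤ : ℕ∞) f) :
    ContDiff ℝ (⊤ : ℕ∞) (pdv f) :=
  (hf.fderiv_right (by exact_mod_cast le_top)).clm_apply contDiff_const

lemma key (g : ℝ × ℝ → ℝ) (hg : DifferentiableAt ℝ g 0) :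
    HasDerivAt (fun t : ℝ => g (0, t)) (pdv g 0) 0 := by
  have hγ : HasDerivAt (fun t : ℝ => ((0:ℝ), t)) ((0:ℝ), (1:ℝ)) 0 :=
    (hasDerivAt_const _ _).prodMk (hasDerivAt_id _)
  have := hg.hasFDerivAt.comp_hasDerivAt 0 hγ
  simpa [pdv, Function.comp_def, Pi.add_def, Pi.pow_def, Pi.mul_def, Pi.div_def] using this


/-- The origin is a red sub-parabolic point (`v₂κ₁(0) = 0`, where `v₂` is the unit
principal vector field of the other principal curvature `κ₂`, with `v₂(0) = ∂/∂v`)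
iff `a₂₁ = 0`. -/
theorem stmt12
    (f : ℝ × ℝ → ℝ) (hf : ContDiff ℝ (⊤ : ℕ∞) f)
    (k1 k2 a30 a21 a12 a03 a40 a31 a22 : ℝ) (hk : k1 ≠ k2)
    (h00 : f 0 = 0) (h10 : pdu f 0 = 0) (h01 : pdv f 0 = 0)
    (h20 : pdu (pdu f) 0 = k1) (h11 : pdv (pdu f) 0 = 0) (h02 : pdv (pdv f) 0 = k2)
    (h30 : pdu (pdu (pdu f)) 0 = a30) (h21 : pdv (pdu (pdu f)) 0 = a21)
    (h12 : pdv (pdv (pdu f)) 0 = a12) (h03 : pdv (pdv (pdv f)) 0 = a03)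
    (h40 : pdu (pdu (pdu (pdu f))) 0 = a40)
    (h31 : pdv (pdu (pdu (pdu f))) 0 = a31)
    (h22 : pdv (pdv (pdu (pdu f))) 0 = a22)
    (κ : ℝ × ℝ → ℝ) (hκs : ContDiffAt ℝ (⊤ : ℕ∞) κ 0) (hκ0 : κ 0 = k1)
    (hκeig : ∀ᶠ p in nhds (0 : ℝ × ℝ), IsPrincipalCurvature f κ p)
    (κ' : ℝ × ℝ → ℝ) (hκ's : ContDiffAt ℝ (⊤ : ℕ∞) κ' 0) (hκ'0 : κ' 0 = k2)
    (hκ'eig : ∀ᶠ p in nhds (0 : ℝ × ℝ), IsPrincipalCurvature f κ' p)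
    (w : ℝ × ℝ → ℝ × ℝ) (hws : ContDiffAt ℝ (⊤ : ℕ∞) w 0) (hw0 : w 0 = (0, 1))
    (hw : ∀ᶠ p in nhds (0 : ℝ × ℝ), IsPrincipalField f κ' w p) :
    dirDeriv w κ 0 = 0 ↔ a21 = 0 := by
  have hpu : ContDiff ℝ (⊤ : ℕ∞) (pdu f) := contDiff_pdu hf
  have hpv : ContDiff ℝ (⊤ : ℕ∞) (pdv f) := contDiff_pdv hf
  -- value lemmas at (0,0) (defeq to 0)
  have hPv : pdu f ((0:ℝ), (0:ℝ)) = 0 := h10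
  have hQv : pdv f ((0:ℝ), (0:ℝ)) = 0 := h01
  have hAv : pdu (pdu f) ((0:ℝ), (0:ℝ)) = k1 := h20
  have hBv : pdv (pdu f) ((0:ℝ), (0:ℝ)) = 0 := h11
  have hCv : pdv (pdv f) ((0:ℝ), (0:ℝ)) = k2 := h02
  have hκv : κ ((0:ℝ), (0:ℝ)) = k1 := hκ0
  -- scalar HasDerivAt along the curve t ↦ (0,t)
  have hP : HasDerivAt (fun t : ℝ => pdu f (0, t)) 0 0 :=
    h11 ▸ key _ ((hpu.differentiable (by simp)) 0)
  have hQ : HasDerivAt (fun t : ℝ => pdv f (0, t)) k2 0 :=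
    h02 ▸ key _ ((hpv.differentiable (by simp)) 0)
  have hA : HasDerivAt (fun t : ℝ => pdu (pdu f) (0, t)) a21 0 :=
    h21 ▸ key _ (((contDiff_pdu hpu).differentiable (by simp)) 0)
  have hB : HasDerivAt (fun t : ℝ => pdv (pdu f) (0, t)) a12 0 :=
    h12 ▸ key _ (((contDiff_pdv hpu).differentiable (by simp)) 0)
  have hC : HasDerivAt (fun t : ℝ => pdv (pdv f) (0, t)) a03 0 :=
    h03 ▸ key _ (((contDiff_pdv hpv).differentiable (by simp)) 0)
  set c : ℝ := pdv κ 0 with hcdef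
  have hκγ : HasDerivAt (fun t : ℝ => κ (0, t)) c 0 :=
    key _ (hκs.differentiableAt (by simp))
  -- the square root factor
  have hq : HasDerivAt (fun t : ℝ => 1 + pdu f (0, t) ^ 2 + pdv f (0, t) ^ 2) 0 0 := by
    have := ((hasDerivAt_const (0:ℝ) (1:ℝ)).add (hP.pow 2)).add (hQ.pow 2)
    simpa [hPv, hQv, Pi.add_def, Pi.pow_def, Pi.mul_def, Pi.div_def] using this
  have hsq : HasDerivAt (fun t : ℝ =>
      Real.sqrt (1 + pdu f (0, t) ^ 2 + pdv f (0, t) ^ 2)) 0 0 := by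
    have h1 : (1 + pdu f ((0:ℝ), (0:ℝ)) ^ 2 + pdv f ((0:ℝ), (0:ℝ)) ^ 2) = 1 := by
      rw [hPv, hQv]; norm_num
    have h2 := (Real.hasDerivAt_sqrt
      (x := 1 + pdu f ((0:ℝ), (0:ℝ)) ^ 2 + pdv f ((0:ℝ), (0:ℝ)) ^ 2)
      (by rw [h1]; norm_num)).comp 0 hq
    simpa [Function.comp_def, h1] using h2
  have hr0 : Real.sqrt (1 + pdu f ((0:ℝ), (0:ℝ)) ^ 2 + pdv f ((0:ℝ), (0:ℝ)) ^ 2) = 1 := by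
    rw [hPv, hQv]; norm_num
  -- coefficient functions along the curve
  have hEe : HasDerivAt (fun t : ℝ => Ee f (0, t)) 0 0 := by
    have := (hasDerivAt_const (0:ℝ) (1:ℝ)).add (hP.pow 2)
    simpa [Ee, hPv, Pi.add_def, Pi.pow_def, Pi.mul_def, Pi.div_def] using this
  have hFf : HasDerivAt (fun t : ℝ => Ff f (0, t)) 0 0 := by
    have := hP.mul hQ
    simpa [Ff, hPv, hQv, Pi.add_def, Pi.pow_def, Pi.mul_def, Pi.div_def] using this
  have hGg : HasDerivAt (fun t : ℝ => Gg f (0, t)) 0 0 := by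
    have := (hasDerivAt_const (0:ℝ) (1:ℝ)).add (hQ.pow 2)
    simpa [Gg, hQv, Pi.add_def, Pi.pow_def, Pi.mul_def, Pi.div_def] using this
  have hLl : HasDerivAt (fun t : ℝ => Ll f (0, t)) a21 0 := by
    have := hA.div hsq (by rw [hr0]; norm_num)
    simpa [Ll, hPv, hQv, Pi.add_def, Pi.pow_def, Pi.mul_def, Pi.div_def] using this
  have hMm : HasDerivAt (fun t : ℝ => Mm f (0, t)) a12 0 := by
    have := hB.div hsq (by rw [hr0]; norm_num)
    simpa [Mm, hPv, hQv, Pi.add_def, Pi.pow_def, Pi.mul_def, Pi.div_def] using this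
  have hNn : HasDerivAt (fun t : ℝ => Nn f (0, t)) a03 0 := by
    have := hC.div hsq (by rw [hr0]; norm_num)
    simpa [Nn, hPv, hQv, Pi.add_def, Pi.pow_def, Pi.mul_def, Pi.div_def] using this
  -- the characteristic polynomial along the curve
  have hΦ := ((((hEe.mul hGg).sub (hFf.pow 2)).mul (hκγ.pow 2)).sub
      ((((hEe.mul hNn).sub ((hFf.const_mul 2).mul hMm)).add (hGg.mul hLl)).mul hκγ)).add
      ((hLl.mul hNn).sub (hMm.pow 2))
  -- it is eventually zero
  have hcont : Filter.Tendsto (fun t : ℝ => ((0:ℝ), t)) (nhds 0) (nhds (0 : ℝ × ℝ)) := by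
    have h : Continuous (fun t : ℝ => ((0:ℝ), t)) := continuous_const.prodMk continuous_id
    simpa [Prod.mk_zero_zero] using h.tendsto 0
  have hev : ∀ᶠ t in nhds (0:ℝ), IsPrincipalCurvature f κ (0, t) := hcont.eventually hκeig
  have hΦ0 : HasDerivAt (fun t : ℝ =>
      (Ee f (0, t) * Gg f (0, t) - Ff f (0, t) ^ 2) * κ (0, t) ^ 2
      - (Ee f (0, t) * Nn f (0, t) - 2 * Ff f (0, t) * Mm f (0, t)
          + Gg f (0, t) * Ll f (0, t)) * κ (0, t)
      + (Ll f (0, t) * Nn f (0, t) - Mm f (0, t) ^ 2)) 0 0 := by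
    refine (hasDerivAt_const (0:ℝ) (0:ℝ)).congr_of_eventuallyEq ?_
    exact hev.mono fun t ht => ht
  have hkey := hΦ.unique hΦ0
  -- evaluate
  have hE0 : Ee f ((0:ℝ), (0:ℝ)) = 1 := by rw [Ee, hPv]; norm_num
  have hF0 : Ff f ((0:ℝ), (0:ℝ)) = 0 := by rw [Ff, hPv]; ring
  have hG0 : Gg f ((0:ℝ), (0:ℝ)) = 1 := by rw [Gg, hQv]; norm_num
  have hL0 : Ll f ((0:ℝ), (0:ℝ)) = k1 := by rw [Ll, hAv, hr0]; norm_num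
  have hM0 : Mm f ((0:ℝ), (0:ℝ)) = 0 := by rw [Mm, hBv]; simp
  have hN0 : Nn f ((0:ℝ), (0:ℝ)) = k2 := by rw [Nn, hCv, hr0]; norm_num
  simp only [Pi.add_apply, Pi.sub_apply, Pi.mul_apply, Pi.pow_apply] at hkey
  rw [hE0, hF0, hG0, hL0, hM0, hN0, hκv] at hkey
  have hne : k1 - k2 ≠ 0 := sub_ne_zero.mpr hk
  have hc : c = a21 := by
    have h2 : (k1 - k2) * (c - a21) = 0 := by linear_combination hkey
    rcases mul_eq_zero.mp h2 with h | h
    · exact absurd h hne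
    · linarith
  have hd : dirDeriv w κ 0 = c := by
    show fderiv ℝ κ 0 (w 0) = c
    rw [hw0]; rfl
  rw [hd, hc]
end
end

section
/- Let g : U → ℝ³ be a regular surface given in Monge form at an umbilic (k₁ = k₂ = k ≠ 0 at p = 0) and let t = 1/k. Then the parallel surface g^t = g + t·n satisfies: rank of the differential d(g^t) at the origin is 0, and the discriminant function λ(u,v) = det(g^t_u, g^t_v, n) satisfies λ(0) = λ_u(0) = λ_v(0) = 0 and det Hess λ(0) = −Γ/k₁⁴, where Γ is the 4×4 umbilic determinant in the coefficients a₃₀, a₂₁, a₁₂, a₀₃ of the cubic part. -/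
noncomputable section

/-- Partial derivative in the first variable, for `ℝ³`-valued maps. -/
def Du (g : ℝ × ℝ → Fin 3 → ℝ) (p : ℝ × ℝ) : Fin 3 → ℝ := fderiv ℝ g p (1, 0)

/-- Partial derivative in the second variable, for `ℝ³`-valued maps. -/
def Dv (g : ℝ × ℝ → Fin 3 → ℝ) (p : ℝ × ℝ) : Fin 3 → ℝ := fderiv ℝ g p (0, 1)

/-- Euclidean dot product on `ℝ³`. -/
def dot3 (a b : Fin 3 → ℝ) : ℝ := a 0 * b 0 + a 1 * b 1 + a 2 * b 2

/-- Cross product on `ℝ³`. -/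
def cross3 (a b : Fin 3 → ℝ) : Fin 3 → ℝ :=
  ![a 1 * b 2 - a 2 * b 1, a 2 * b 0 - a 0 * b 2, a 0 * b 1 - a 1 * b 0]

/-- Euclidean norm on `ℝ³`. -/
def norm3 (a : Fin 3 → ℝ) : ℝ := Real.sqrt (dot3 a a)

/-- Determinant of three vectors in `ℝ³`. -/
def det3 (a b c : Fin 3 → ℝ) : ℝ := dot3 (cross3 a b) c

/-- The unit normal of a regular surface. -/
def unitNormal (g : ℝ × ℝ → Fin 3 → ℝ) (p : ℝ × ℝ) : Fin 3 → ℝ :=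
  (norm3 (cross3 (Du g p) (Dv g p)))⁻¹ • cross3 (Du g p) (Dv g p)

namespace S16

/-- The continuous linear map `ℝ×ℝ → ℝ` with partials `a`, `b`. -/
def pcl (a b : ℝ) : ℝ × ℝ →L[ℝ] ℝ :=
  a • ContinuousLinearMap.fst ℝ ℝ ℝ + b • ContinuousLinearMap.snd ℝ ℝ ℝ

@[simp] lemma pcl_apply (a b : ℝ) (v : ℝ × ℝ) : pcl a b v = a * v.1 + b * v.2 := by
  simp [pcl, smul_eq_mul]

lemma clm_eq_pcl (L : ℝ × ℝ →L[ℝ] ℝ) : L = pcl (L (1,0)) (L (0,1)) := by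
  refine ContinuousLinearMap.ext fun v => ?_
  have hv : v = v.1 • ((1:ℝ),(0:ℝ)) + v.2 • ((0:ℝ),(1:ℝ)) := by
    ext <;> simp
  have : L v = L (v.1 • ((1:ℝ),(0:ℝ)) + v.2 • ((0:ℝ),(1:ℝ))) := by rw [← hv]
  rw [pcl_apply, this, map_add, map_smul, map_smul]
  simp [smul_eq_mul, mul_comm]

/-- `φ` has partial derivatives `du`, `dv` everywhere. -/
def HasPd (φ du dv : ℝ × ℝ → ℝ) : Prop :=
  ∀ p, HasFDerivAt φ (pcl (du p) (dv p)) p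

namespace HasPd

variable {φ ψ du dv eu ev : ℝ × ℝ → ℝ}

lemma differentiableAt (h : HasPd φ du dv) (p : ℝ × ℝ) : DifferentiableAt ℝ φ p :=
  (h p).differentiableAt

lemma pdu_eq (h : HasPd φ du dv) (p : ℝ × ℝ) : pdu φ p = du p := by
  simp [pdu, (h p).fderiv]

lemma pdv_eq (h : HasPd φ du dv) (p : ℝ × ℝ) : pdv φ p = dv p := by
  simp [pdv, (h p).fderiv]

lemma congr' (h : HasPd φ du dv) (h1 : ∀ p, du p = eu p) (h2 : ∀ p, dv p = ev p) :
    HasPd φ eu ev := by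
  intro p; rw [← h1, ← h2]; exact h p

lemma congr_fun (h : HasPd φ du dv) (h1 : ∀ p, φ p = ψ p) : HasPd ψ du dv := by
  intro p
  exact (h p).congr_of_eventuallyEq (Filter.Eventually.of_forall fun q => (h1 q).symm)

protected lemma const (c : ℝ) : HasPd (fun _ => c) (fun _ => 0) (fun _ => 0) := by
  intro p
  have : pcl (0:ℝ) 0 = 0 := by refine ContinuousLinearMap.ext fun v => ?_; simp
  rw [this]; exact hasFDerivAt_const c p

protected lemma fst : HasPd (fun p => p.1) (fun _ => 1) (fun _ => 0) := by
  intro p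
  have : pcl (1:ℝ) 0 = ContinuousLinearMap.fst ℝ ℝ ℝ := by
    refine ContinuousLinearMap.ext fun v => ?_; simp
  rw [this]; exact hasFDerivAt_fst

protected lemma snd : HasPd (fun p => p.2) (fun _ => 0) (fun _ => 1) := by
  intro p
  have : pcl (0:ℝ) 1 = ContinuousLinearMap.snd ℝ ℝ ℝ := by
    refine ContinuousLinearMap.ext fun v => ?_; simp
  rw [this]; exact hasFDerivAt_snd

protected lemma add (h : HasPd φ du dv) (h' : HasPd ψ eu ev) :
    HasPd (fun p => φ p + ψ p) (fun p => du p + eu p) (fun p => dv p + ev p) := by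
  intro p
  have := (h p).add (h' p)
  have e : pcl (du p) (dv p) + pcl (eu p) (ev p) = pcl (du p + eu p) (dv p + ev p) := by
    refine ContinuousLinearMap.ext fun v => ?_; simp; ring
  rwa [e] at this

protected lemma neg (h : HasPd φ du dv) :
    HasPd (fun p => -φ p) (fun p => -du p) (fun p => -dv p) := by
  intro p
  have := (h p).neg
  have e : -pcl (du p) (dv p) = pcl (-du p) (-dv p) := by
    refine ContinuousLinearMap.ext fun v => ?_; simp; ring
  rwa [e] at this

protected lemma sub (h : HasPd φ du dv) (h' : HasPd ψ eu ev) :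
    HasPd (fun p => φ p - ψ p) (fun p => du p - eu p) (fun p => dv p - ev p) := by
  intro p
  have := (h p).sub (h' p)
  have e : pcl (du p) (dv p) - pcl (eu p) (ev p) = pcl (du p - eu p) (dv p - ev p) := by
    refine ContinuousLinearMap.ext fun v => ?_; simp; ring
  rwa [e] at this

protected lemma mul (h : HasPd φ du dv) (h' : HasPd ψ eu ev) :
    HasPd (fun p => φ p * ψ p)
      (fun p => du p * ψ p + φ p * eu p) (fun p => dv p * ψ p + φ p * ev p) := by
  intro p
  have := (h p).mul (h' p)
  have e : φ p • pcl (eu p) (ev p) + ψ p • pcl (du p) (dv p)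
      = pcl (du p * ψ p + φ p * eu p) (dv p * ψ p + φ p * ev p) := by
    refine ContinuousLinearMap.ext fun v => ?_; simp [smul_eq_mul]; ring
  rwa [e] at this

protected lemma cmul (c : ℝ) (h : HasPd φ du dv) :
    HasPd (fun p => c * φ p) (fun p => c * du p) (fun p => c * dv p) :=
  ((HasPd.const c).mul h).congr' (fun p => by simp) (fun p => by simp)

end HasPd

/-- Second-order partial derivative data. -/
structure HasPd2 (φ du dv duu duv dvu dvv : ℝ × ℝ → ℝ) : Prop where
  h : HasPd φ du dv
  hu : HasPd du duu duv
  hv : HasPd dv dvu dvv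

namespace HasPd2

variable {φ ψ du dv duu duv dvu dvv eu ev euu euv evu evv : ℝ × ℝ → ℝ}

protected lemma const (c : ℝ) :
    HasPd2 (fun _ => c) (fun _ => 0) (fun _ => 0) (fun _ => 0) (fun _ => 0)
      (fun _ => 0) (fun _ => 0) :=
  ⟨HasPd.const c, HasPd.const 0, HasPd.const 0⟩

protected lemma add (h : HasPd2 φ du dv duu duv dvu dvv)
    (h' : HasPd2 ψ eu ev euu euv evu evv) :
    HasPd2 (fun p => φ p + ψ p) (fun p => du p + eu p) (fun p => dv p + ev p)
      (fun p => duu p + euu p) (fun p => duv p + euv p)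
      (fun p => dvu p + evu p) (fun p => dvv p + evv p) :=
  ⟨h.h.add h'.h, h.hu.add h'.hu, h.hv.add h'.hv⟩

protected lemma neg (h : HasPd2 φ du dv duu duv dvu dvv) :
    HasPd2 (fun p => -φ p) (fun p => -du p) (fun p => -dv p)
      (fun p => -duu p) (fun p => -duv p) (fun p => -dvu p) (fun p => -dvv p) :=
  ⟨h.h.neg, h.hu.neg, h.hv.neg⟩

protected lemma sub (h : HasPd2 φ du dv duu duv dvu dvv)
    (h' : HasPd2 ψ eu ev euu euv evu evv) :
    HasPd2 (fun p => φ p - ψ p) (fun p => du p - eu p) (fun p => dv p - ev p)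
      (fun p => duu p - euu p) (fun p => duv p - euv p)
      (fun p => dvu p - evu p) (fun p => dvv p - evv p) :=
  ⟨h.h.sub h'.h, h.hu.sub h'.hu, h.hv.sub h'.hv⟩

protected lemma mul (h : HasPd2 φ du dv duu duv dvu dvv)
    (h' : HasPd2 ψ eu ev euu euv evu evv) :
    HasPd2 (fun p => φ p * ψ p)
      (fun p => du p * ψ p + φ p * eu p)
      (fun p => dv p * ψ p + φ p * ev p)
      (fun p => (duu p * ψ p + du p * eu p) + (du p * eu p + φ p * euu p))
      (fun p => (duv p * ψ p + du p * ev p) + (dv p * eu p + φ p * euv p))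
      (fun p => (dvu p * ψ p + dv p * eu p) + (du p * ev p + φ p * evu p))
      (fun p => (dvv p * ψ p + dv p * ev p) + (dv p * ev p + φ p * evv p)) :=
  ⟨h.h.mul h'.h, (h.hu.mul h'.h).add (h.h.mul h'.hu), (h.hv.mul h'.h).add (h.h.mul h'.hv)⟩

protected lemma cmul (c : ℝ) (h : HasPd2 φ du dv duu duv dvu dvv) :
    HasPd2 (fun p => c * φ p) (fun p => c * du p) (fun p => c * dv p)
      (fun p => c * duu p) (fun p => c * duv p) (fun p => c * dvu p) (fun p => c * dvv p) :=
  ⟨h.h.cmul c, h.hu.cmul c, h.hv.cmul c⟩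

end HasPd2


lemma contDiff_pdu {f : ℝ × ℝ → ℝ} (hf : ContDiff ℝ (⊤:ℕ∞) f) :
    ContDiff ℝ (⊤:ℕ∞) (pdu f) := by
  unfold pdu
  exact (hf.fderiv_right (m := (⊤:ℕ∞)) (by exact_mod_cast le_top)).clm_apply contDiff_const

lemma contDiff_pdv {f : ℝ × ℝ → ℝ} (hf : ContDiff ℝ (⊤:ℕ∞) f) :
    ContDiff ℝ (⊤:ℕ∞) (pdv f) := by
  unfold pdv
  exact (hf.fderiv_right (m := (⊤:ℕ∞)) (by exact_mod_cast le_top)).clm_apply contDiff_const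

lemma hasPd_of_contDiff {φ : ℝ × ℝ → ℝ} (hφ : ContDiff ℝ (⊤:ℕ∞) φ) :
    HasPd φ (pdu φ) (pdv φ) := by
  intro p
  have h := (hφ.differentiable (by simp)).differentiableAt (x := p) |>.hasFDerivAt
  exact h.congr_fderiv (clm_eq_pcl _)

lemma pdu_pdv_comm {φ : ℝ × ℝ → ℝ} (hφ : ContDiff ℝ (⊤:ℕ∞) φ) (p : ℝ × ℝ) :
    pdu (pdv φ) p = pdv (pdu φ) p := by
  have hd : DifferentiableAt ℝ (fderiv ℝ φ) p :=
    ((hφ.fderiv_right (m := (⊤:ℕ∞)) (by exact_mod_cast le_top)).differentiable (by simp)).differentiableAt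
  have h1 : pdu (pdv φ) p = fderiv ℝ (fderiv ℝ φ) p (1,0) (0,1) := by
    unfold pdu pdv
    rw [fderiv_clm_apply hd (differentiableAt_const _)]
    simp
  have h2 : pdv (pdu φ) p = fderiv ℝ (fderiv ℝ φ) p (0,1) (1,0) := by
    unfold pdu pdv
    rw [fderiv_clm_apply hd (differentiableAt_const _)]
    simp
  rw [h1, h2]
  exact (hφ.contDiffAt.isSymmSndFDerivAt (by simp only [minSmoothness_of_isRCLikeNormedField]; exact WithTop.coe_le_coe.mpr le_top)).eq _ _



section Surface

variable {A B C au av bu bv cu cv : ℝ × ℝ → ℝ}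

lemma hasFDerivAt_vec3 (hA : HasPd A au av) (hB : HasPd B bu bv) (hC : HasPd C cu cv)
    (p : ℝ × ℝ) :
    HasFDerivAt (fun q => (![A q, B q, C q] : Fin 3 → ℝ))
      (ContinuousLinearMap.pi ![pcl (au p) (av p), pcl (bu p) (bv p), pcl (cu p) (cv p)]) p := by
  apply hasFDerivAt_pi''
  intro i
  fin_cases i
  · simpa using hA p
  · simpa using hB p
  · simpa using hC p

lemma Du_vec3 (hA : HasPd A au av) (hB : HasPd B bu bv) (hC : HasPd C cu cv)
    (p : ℝ × ℝ) :
    Du (fun q => (![A q, B q, C q] : Fin 3 → ℝ)) p = ![au p, bu p, cu p] := by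
  have h := (hasFDerivAt_vec3 hA hB hC p).fderiv
  show fderiv ℝ _ p (1,0) = _
  rw [h]
  funext i
  fin_cases i <;> simp

lemma Dv_vec3 (hA : HasPd A au av) (hB : HasPd B bu bv) (hC : HasPd C cu cv)
    (p : ℝ × ℝ) :
    Dv (fun q => (![A q, B q, C q] : Fin 3 → ℝ)) p = ![av p, bv p, cv p] := by
  have h := (hasFDerivAt_vec3 hA hB hC p).fderiv
  show fderiv ℝ _ p (0,1) = _
  rw [h]
  funext i
  fin_cases i <;> simp

end Surface

section Atoms

variable (f : ℝ × ℝ → ℝ)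

def X : ℝ × ℝ → ℝ := pdu f
def Y : ℝ × ℝ → ℝ := pdv f
def P : ℝ × ℝ → ℝ := pdu (X f)
def Q : ℝ × ℝ → ℝ := pdv (X f)
def R : ℝ × ℝ → ℝ := pdv (Y f)
def A1 : ℝ × ℝ → ℝ := pdu (P f)
def A2 : ℝ × ℝ → ℝ := pdv (P f)
def A3 : ℝ × ℝ → ℝ := pdv (Q f)
def A4 : ℝ × ℝ → ℝ := pdv (R f)
def SS : ℝ × ℝ → ℝ := fun p => X f p * X f p + (Y f p * Y f p + 1)
def U : ℝ × ℝ → ℝ := fun p => (Real.sqrt (SS f p))⁻¹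
def U1 : ℝ × ℝ → ℝ := fun p =>
  -((X f p * P f p + Y f p * Q f p) * (U f p * (U f p * U f p)))
def V1 : ℝ × ℝ → ℝ := fun p =>
  -((X f p * Q f p + Y f p * R f p) * (U f p * (U f p * U f p)))

variable {f}

lemma hX (hf : ContDiff ℝ (⊤:ℕ∞) f) : HasPd (X f) (P f) (Q f) :=
  hasPd_of_contDiff (contDiff_pdu hf)

lemma hY (hf : ContDiff ℝ (⊤:ℕ∞) f) : HasPd (Y f) (Q f) (R f) :=
  (hasPd_of_contDiff (contDiff_pdv hf)).congr' (fun p => pdu_pdv_comm hf p) (fun _ => rfl)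

lemma hP (hf : ContDiff ℝ (⊤:ℕ∞) f) : HasPd (P f) (A1 f) (A2 f) :=
  hasPd_of_contDiff (contDiff_pdu (contDiff_pdu hf))

lemma hQ (hf : ContDiff ℝ (⊤:ℕ∞) f) : HasPd (Q f) (A2 f) (A3 f) :=
  (hasPd_of_contDiff (contDiff_pdv (contDiff_pdu hf))).congr'
    (fun p => pdu_pdv_comm (contDiff_pdu hf) p) (fun _ => rfl)

lemma hR (hf : ContDiff ℝ (⊤:ℕ∞) f) : HasPd (R f) (A3 f) (A4 f) := by
  have e : pdu (pdv f) = pdv (pdu f) := funext (pdu_pdv_comm hf)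
  refine (hasPd_of_contDiff (contDiff_pdv (contDiff_pdv hf))).congr' (fun p => ?_) (fun _ => rfl)
  show pdu (pdv (pdv f)) p = pdv (pdv (pdu f)) p
  rw [pdu_pdv_comm (contDiff_pdv hf) p, e]

lemma hA1 (hf : ContDiff ℝ (⊤:ℕ∞) f) : HasPd (A1 f) (pdu (A1 f)) (pdv (A1 f)) :=
  hasPd_of_contDiff (contDiff_pdu (contDiff_pdu (contDiff_pdu hf)))
lemma hA2 (hf : ContDiff ℝ (⊤:ℕ∞) f) : HasPd (A2 f) (pdu (A2 f)) (pdv (A2 f)) :=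
  hasPd_of_contDiff (contDiff_pdv (contDiff_pdu (contDiff_pdu hf)))
lemma hA3 (hf : ContDiff ℝ (⊤:ℕ∞) f) : HasPd (A3 f) (pdu (A3 f)) (pdv (A3 f)) :=
  hasPd_of_contDiff (contDiff_pdv (contDiff_pdv (contDiff_pdu hf)))
lemma hA4 (hf : ContDiff ℝ (⊤:ℕ∞) f) : HasPd (A4 f) (pdu (A4 f)) (pdv (A4 f)) :=
  hasPd_of_contDiff (contDiff_pdv (contDiff_pdv (contDiff_pdv hf)))

lemma SS_pos (p : ℝ × ℝ) : 0 < SS f p := by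
  have := mul_self_nonneg (X f p); have := mul_self_nonneg (Y f p)
  unfold SS; nlinarith

lemma sqrt_SS_ne (p : ℝ × ℝ) : Real.sqrt (SS f p) ≠ 0 :=
  (Real.sqrt_pos.mpr (SS_pos p)).ne'

lemma hU (hf : ContDiff ℝ (⊤:ℕ∞) f) : HasPd (U f) (U1 f) (V1 f) := by
  intro p
  have hSpd : HasPd (SS f) _ _ :=
    ((hX hf).mul (hX hf)).add (((hY hf).mul (hY hf)).add (HasPd.const 1))
  have hW := (hSpd p).sqrt (SS_pos p).ne'
  have hUU := (hasDerivAt_inv (sqrt_SS_ne (f := f) p)).comp_hasFDerivAt p hW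
  refine (hUU.congr_of_eventuallyEq (Filter.Eventually.of_forall fun q => rfl)).congr_fderiv ?_
  refine ContinuousLinearMap.ext fun v => ?_
  simp only [pcl_apply, ContinuousLinearMap.coe_smul', Pi.smul_apply, smul_eq_mul,
    U1, V1, U]
  have hs := sqrt_SS_ne (f := f) p
  field_simp
  ring

end Atoms


section GT
variable (f : ℝ × ℝ → ℝ) (k : ℝ)

def D00 : ℝ × ℝ → ℝ := fun p => 1 - 1/k * (P f p * U f p + X f p * U1 f p)
def D01 : ℝ × ℝ → ℝ := fun p => -(1/k * (Q f p * U f p + X f p * V1 f p))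
def D10 : ℝ × ℝ → ℝ := fun p => -(1/k * (Q f p * U f p + Y f p * U1 f p))
def D11 : ℝ × ℝ → ℝ := fun p => 1 - 1/k * (R f p * U f p + Y f p * V1 f p)
def D20 : ℝ × ℝ → ℝ := fun p => X f p + 1/k * U1 f p
def D21 : ℝ × ℝ → ℝ := fun p => Y f p + 1/k * V1 f p

def EE : ℝ × ℝ → ℝ := fun p =>
  (D10 f k p * D21 f k p - D20 f k p * D11 f k p) * (-(X f p * U f p)) +
  ((D20 f k p * D01 f k p - D00 f k p * D21 f k p) * (-(Y f p * U f p)) +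
   (D00 f k p * D11 f k p - D10 f k p * D01 f k p) * U f p)

end GT

end S16

set_option maxHeartbeats 4000000 in
open S16 in
/-- At an umbilic of a Monge form surface (`k₁ = k₂ = k ≠ 0`) and `t = 1/k`, the
parallel surface `gᵗ = g + t·n` has `d(gᵗ)(0) = 0`, and its discriminant function
`λ = det(gᵗ_u, gᵗ_v, n)` satisfies `λ(0) = λ_u(0) = λ_v(0) = 0` and
`det Hess λ(0) = -Γ/k⁴`. -/
theorem stmt16
    (f : ℝ × ℝ → ℝ) (hf : ContDiff ℝ (⊤ : ℕ∞) f)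
    (k a30 a21 a12 a03 : ℝ) (hk : k ≠ 0)
    (h00 : f 0 = 0) (h10 : pdu f 0 = 0) (h01 : pdv f 0 = 0)
    (h20 : pdu (pdu f) 0 = k) (h11 : pdv (pdu f) 0 = 0) (h02 : pdv (pdv f) 0 = k)
    (h30 : pdu (pdu (pdu f)) 0 = a30) (h21 : pdv (pdu (pdu f)) 0 = a21)
    (h12 : pdv (pdv (pdu f)) 0 = a12) (h03 : pdv (pdv (pdv f)) 0 = a03)
    (g : ℝ × ℝ → Fin 3 → ℝ) (hg : g = fun p => ![p.1, p.2, f p])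
    (gt : ℝ × ℝ → Fin 3 → ℝ) (hgt : gt = fun p => g p + (1 / k) • unitNormal g p)
    (lam : ℝ × ℝ → ℝ)
    (hlam : lam = fun p => det3 (Du gt p) (Dv gt p) (unitNormal g p))
    (Γ : ℝ)
    (hGamma : Γ = (!![a30, 2*a21, a12, 0;
                      0, a30, 2*a21, a12;
                      a21, 2*a12, a03, 0;
                      0, a21, 2*a12, a03] : Matrix (Fin 4) (Fin 4) ℝ).det) :
    fderiv ℝ gt 0 = 0 ∧
    lam 0 = 0 ∧ pdu lam 0 = 0 ∧ pdv lam 0 = 0 ∧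
    (!![pdu (pdu lam) 0, pdu (pdv lam) 0;
        pdv (pdu lam) 0, pdv (pdv lam) 0] : Matrix (Fin 2) (Fin 2) ℝ).det
      = -Γ / k ^ 4 := by
  -- first-order derivative facts for the atoms
  have hXp := hX hf
  have hYp := hY hf
  have hPp := hP hf
  have hQp := hQ hf
  have hRp := hR hf
  have hUp := hU hf
  have hfx : HasPd f (X f) (Y f) := hasPd_of_contDiff hf
  -- first-order facts for U1 V1
  have hU1pd : HasPd (U1 f) _ _ :=
    (((hXp.mul hPp).add (hYp.mul hQp)).mul (hUp.mul (hUp.mul hUp))).neg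
  have hV1pd : HasPd (V1 f) _ _ :=
    (((hXp.mul hQp).add (hYp.mul hRp)).mul (hUp.mul (hUp.mul hUp))).neg
  -- second-order bundles
  have hx2 : HasPd2 (X f) (P f) (Q f) (A1 f) (A2 f) (A2 f) (A3 f) := ⟨hXp, hPp, hQp⟩
  have hy2 : HasPd2 (Y f) (Q f) (R f) (A2 f) (A3 f) (A3 f) (A4 f) := ⟨hYp, hQp, hRp⟩
  have hP2 : HasPd2 (P f) (A1 f) (A2 f) _ _ _ _ := ⟨hPp, hA1 hf, hA2 hf⟩
  have hQ2 : HasPd2 (Q f) (A2 f) (A3 f) _ _ _ _ := ⟨hQp, hA2 hf, hA3 hf⟩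
  have hR2 : HasPd2 (R f) (A3 f) (A4 f) _ _ _ _ := ⟨hRp, hA3 hf, hA4 hf⟩
  have hU2 : HasPd2 (U f) (U1 f) (V1 f) _ _ _ _ := ⟨hUp, hU1pd, hV1pd⟩
  have hU12 : HasPd2 (U1 f) _ _ _ _ _ _ :=
    (((hx2.mul hP2).add (hy2.mul hQ2)).mul (hU2.mul (hU2.mul hU2))).neg
  have hV12 : HasPd2 (V1 f) _ _ _ _ _ _ :=
    (((hx2.mul hQ2).add (hy2.mul hR2)).mul (hU2.mul (hU2.mul hU2))).neg
  -- the surface g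
  have hDug : ∀ p, Du g p = ![1, 0, X f p] := by
    intro p; rw [hg]; exact Du_vec3 HasPd.fst HasPd.snd hfx p
  have hDvg : ∀ p, Dv g p = ![0, 1, Y f p] := by
    intro p; rw [hg]; exact Dv_vec3 HasPd.fst HasPd.snd hfx p
  have hnormal : ∀ p, unitNormal g p = ![-(X f p * U f p), -(Y f p * U f p), U f p] := by
    intro p
    unfold unitNormal
    rw [hDug p, hDvg p]
    have hcross : cross3 ![1, 0, X f p] ![0, 1, Y f p] = ![-(X f p), -(Y f p), 1] := by
      funext i; fin_cases i <;> simp [cross3]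
    rw [hcross]
    have hnorm : norm3 ![-(X f p), -(Y f p), 1] = Real.sqrt (SS f p) := by
      unfold norm3 dot3
      congr 1
      simp [SS]
      ring
    rw [hnorm]
    funext i
    fin_cases i <;> simp [U, smul_eq_mul] <;> ring
  -- the parallel surface gt, componentwise
  have hgt' : gt = fun p => (![p.1 - 1/k * (X f p * U f p),
      p.2 - 1/k * (Y f p * U f p), f p + 1/k * U f p] : Fin 3 → ℝ) := by
    rw [hgt]
    funext p
    have hgp : g p = ![p.1, p.2, f p] := by rw [hg]
    funext i
    fin_cases i <;> simp [hgp, hnormal p, smul_eq_mul] <;> ring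
  have hgt0' : HasPd (fun p => p.1 - 1/k * (X f p * U f p)) (D00 f k) (D01 f k) :=
    (HasPd.fst.sub ((hXp.mul hUp).cmul (1/k))).congr'
      (fun p => by simp [D00]) (fun p => by simp [D01])
  have hgt1' : HasPd (fun p => p.2 - 1/k * (Y f p * U f p)) (D10 f k) (D11 f k) :=
    (HasPd.snd.sub ((hYp.mul hUp).cmul (1/k))).congr'
      (fun p => by simp [D10]) (fun p => by simp [D11])
  have hgt2' : HasPd (fun p => f p + 1/k * U f p) (D20 f k) (D21 f k) :=
    (hfx.add (hUp.cmul (1/k))).congr'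
      (fun p => by simp [D20]) (fun p => by simp [D21])
  have hDugt : ∀ p, Du gt p = ![D00 f k p, D10 f k p, D20 f k p] := by
    intro p; rw [hgt']; exact Du_vec3 hgt0' hgt1' hgt2' p
  have hDvgt : ∀ p, Dv gt p = ![D01 f k p, D11 f k p, D21 f k p] := by
    intro p; rw [hgt']; exact Dv_vec3 hgt0' hgt1' hgt2' p
  -- lambda as explicit expression
  have hlamEE : lam = EE f k := by
    funext p
    rw [hlam]
    show det3 (Du gt p) (Dv gt p) (unitNormal g p) = _
    rw [hDugt p, hDvgt p, hnormal p]
    simp [det3, cross3, dot3, EE]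
    ring
  -- second-order data for the D functions and for EE
  have hD00_2 : HasPd2 (D00 f k) _ _ _ _ _ _ :=
    (HasPd2.const 1).sub (((hP2.mul hU2).add (hx2.mul hU12)).cmul (1/k))
  have hD01_2 : HasPd2 (D01 f k) _ _ _ _ _ _ :=
    (((hQ2.mul hU2).add (hx2.mul hV12)).cmul (1/k)).neg
  have hD10_2 : HasPd2 (D10 f k) _ _ _ _ _ _ :=
    (((hQ2.mul hU2).add (hy2.mul hU12)).cmul (1/k)).neg
  have hD11_2 : HasPd2 (D11 f k) _ _ _ _ _ _ :=
    (HasPd2.const 1).sub (((hR2.mul hU2).add (hy2.mul hV12)).cmul (1/k))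
  have hD20_2 : HasPd2 (D20 f k) _ _ _ _ _ _ := hx2.add (hU12.cmul (1/k))
  have hD21_2 : HasPd2 (D21 f k) _ _ _ _ _ _ := hy2.add (hV12.cmul (1/k))
  have hEE2 : HasPd2 (EE f k) _ _ _ _ _ _ :=
    (((hD10_2.mul hD21_2).sub (hD20_2.mul hD11_2)).mul ((hx2.mul hU2).neg)).add
      ((((hD20_2.mul hD01_2).sub (hD00_2.mul hD21_2)).mul ((hy2.mul hU2).neg)).add
        (((hD00_2.mul hD11_2).sub (hD10_2.mul hD01_2)).mul hU2))
  obtain ⟨hE, hEu, hEv⟩ := hEE2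
  -- values at the origin
  have vX : X f 0 = 0 := h10
  have vY : Y f 0 = 0 := h01
  have vP : P f 0 = k := h20
  have vQ : Q f 0 = 0 := h11
  have vR : R f 0 = k := h02
  have vA1 : A1 f 0 = a30 := h30
  have vA2 : A2 f 0 = a21 := h21
  have vA3 : A3 f 0 = a12 := h12
  have vA4 : A4 f 0 = a03 := h03
  have vU : U f 0 = 1 := by simp [U, SS, vX, vY]
  have vU1 : U1 f 0 = 0 := by simp [U1, vX, vY]
  have vV1 : V1 f 0 = 0 := by simp [V1, vX, vY]
  have vD00 : D00 f k 0 = 0 := by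
    simp [D00, vP, vU, vX, vU1]; field_simp; norm_num
  have vD01 : D01 f k 0 = 0 := by simp [D01, vQ, vU, vX, vV1]
  have vD10 : D10 f k 0 = 0 := by simp [D10, vQ, vU, vY, vU1]
  have vD11 : D11 f k 0 = 0 := by
    simp [D11, vR, vU, vY, vV1]; field_simp; norm_num
  have vD20 : D20 f k 0 = 0 := by simp [D20, vX, vU1]
  have vD21 : D21 f k 0 = 0 := by simp [D21, vY, vV1]
  refine ⟨?_, ?_, ?_, ?_, ?_⟩
  · -- fderiv gt 0 = 0
    have hgtF : HasFDerivAt gt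
        (ContinuousLinearMap.pi ![pcl (D00 f k 0) (D01 f k 0),
          pcl (D10 f k 0) (D11 f k 0), pcl (D20 f k 0) (D21 f k 0)]) 0 := by
      rw [hgt']; exact hasFDerivAt_vec3 hgt0' hgt1' hgt2' 0
    rw [hgtF.fderiv]
    refine ContinuousLinearMap.ext fun v => ?_
    funext i
    fin_cases i <;>
      simp [vD00, vD01, vD10, vD11, vD20, vD21]
  · rw [hlamEE]
    simp [EE, vD00, vD01, vD10, vD11, vD20, vD21]
  · rw [hlamEE, hE.pdu_eq 0]
    simp only [vX, vY, vP, vQ, vR, vA1, vA2, vA3, vA4, vU, vU1, vV1,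
      vD00, vD01, vD10, vD11, vD20, vD21]
    field_simp; ring
  · rw [hlamEE, hE.pdv_eq 0]
    simp only [vX, vY, vP, vQ, vR, vA1, vA2, vA3, vA4, vU, vU1, vV1,
      vD00, vD01, vD10, vD11, vD20, vD21]
    field_simp; ring
  · have hpdu1 : pdu lam = pdu (EE f k) := by rw [hlamEE]
    have hpdv1 : pdv lam = pdv (EE f k) := by rw [hlamEE]
    have hpdu2 : pdu (EE f k) = _ := funext hE.pdu_eq
    have hpdv2 : pdv (EE f k) = _ := funext hE.pdv_eq
    have hG : Γ = (a30*a03 - a21*a12)^2 - 4*(a30*a12 - a21^2)*(a21*a03 - a12^2) := by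
      rw [hGamma]
      simp [Matrix.det_succ_row_zero, Fin.sum_univ_succ, Fin.succAbove]
      ring
    rw [Matrix.det_fin_two_of, hG, hpdu1, hpdv1, hpdu2, hpdv2,
      hEu.pdu_eq 0, hEu.pdv_eq 0, hEv.pdu_eq 0, hEv.pdv_eq 0]
    simp only [vX, vY, vP, vQ, vR, vA1, vA2, vA3, vA4, vU, vU1, vV1,
      vD00, vD01, vD10, vD11, vD20, vD21, Matrix.cons_val', Matrix.cons_val_zero,
      Matrix.cons_val_one, Matrix.head_cons, Matrix.empty_val', Matrix.cons_val_fin_one,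
      Matrix.head_fin_const, Matrix.cons_val_two, Matrix.tail_cons, Matrix.cons_val_three]
    field_simp
    ring
end
end

section
/- Write the augmented distance squared function Φ(u,v,x,y,z,t) = −(1/2)(‖(x,y,z) − g(u,v)‖² − t²) for g in Monge form with coefficients k₁, k₂, a_{ij}. Then the Taylor expansion of Φ in (u,v) is Φ = c₀₀ + xu + yv + (1/2)(k̂₁u² + k̂₂v²) + Σ_{i+j≥3}(c_{ij}/(i!j!))u^iv^j, where c₀₀ = (t² − x² − y² − z²)/2, k̂_i = k_i z − 1 (i = 1,2), c_{ij} = a_{ij}z for i+j = 3, c₄₀ = a₄₀z − 3k₁², c₃₁ = a₃₁z, c₂₂ = a₂₂z − k₁k₂, c₁₃ = a₁₃z, c₀₄ = a₀₄z − 3k₂², c₅₀ = a₅₀z − 10k₁a₃₀, and c₀₅ = a₀₅z − 10k₂a₀₃. -/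
noncomputable section

namespace Stmt17Aux

variable {g h : ℝ × ℝ → ℝ} {p : ℝ × ℝ} {c : ℝ}

theorem pduContDiff (hg : ContDiff ℝ (⊤ : ℕ∞) g) : ContDiff ℝ (⊤ : ℕ∞) (pdu g) :=
  (hg.fderiv_right (m := (⊤ : ℕ∞)) (by simp)).clm_apply contDiff_const

theorem pdvContDiff (hg : ContDiff ℝ (⊤ : ℕ∞) g) : ContDiff ℝ (⊤ : ℕ∞) (pdv g) :=
  (hg.fderiv_right (m := (⊤ : ℕ∞)) (by simp)).clm_apply contDiff_const

theorem pduAdd (hg : DifferentiableAt ℝ g p) (hh : DifferentiableAt ℝ h p) :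
    pdu (fun q => g q + h q) p = pdu g p + pdu h p := by
  simp only [pdu, fderiv_fun_add hg hh, ContinuousLinearMap.add_apply]

theorem pduSub (hg : DifferentiableAt ℝ g p) (hh : DifferentiableAt ℝ h p) :
    pdu (fun q => g q - h q) p = pdu g p - pdu h p := by
  simp only [pdu, fderiv_fun_sub hg hh, ContinuousLinearMap.sub_apply]

theorem pduMul (hg : DifferentiableAt ℝ g p) (hh : DifferentiableAt ℝ h p) :
    pdu (fun q => g q * h q) p = g p * pdu h p + h p * pdu g p := by
  simp only [pdu, fderiv_fun_mul hg hh, ContinuousLinearMap.add_apply,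
    ContinuousLinearMap.smul_apply, smul_eq_mul]

theorem pduNeg : pdu (fun q => -g q) p = -pdu g p := by
  simp only [pdu, fderiv_fun_neg, ContinuousLinearMap.neg_apply]

theorem pduConst : pdu (fun _ => c) p = 0 := by simp [pdu]

theorem pduFst : pdu (fun q : ℝ × ℝ => q.1) p = 1 := by simp [pdu, fderiv_fst]
theorem pduSnd : pdu (fun q : ℝ × ℝ => q.2) p = 0 := by simp [pdu, fderiv_snd]

theorem pdvAdd (hg : DifferentiableAt ℝ g p) (hh : DifferentiableAt ℝ h p) :
    pdv (fun q => g q + h q) p = pdv g p + pdv h p := by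
  simp only [pdv, fderiv_fun_add hg hh, ContinuousLinearMap.add_apply]

theorem pdvSub (hg : DifferentiableAt ℝ g p) (hh : DifferentiableAt ℝ h p) :
    pdv (fun q => g q - h q) p = pdv g p - pdv h p := by
  simp only [pdv, fderiv_fun_sub hg hh, ContinuousLinearMap.sub_apply]

theorem pdvMul (hg : DifferentiableAt ℝ g p) (hh : DifferentiableAt ℝ h p) :
    pdv (fun q => g q * h q) p = g p * pdv h p + h p * pdv g p := by
  simp only [pdv, fderiv_fun_mul hg hh, ContinuousLinearMap.add_apply,
    ContinuousLinearMap.smul_apply, smul_eq_mul]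

theorem pdvNeg : pdv (fun q => -g q) p = -pdv g p := by
  simp only [pdv, fderiv_fun_neg, ContinuousLinearMap.neg_apply]

theorem pdvConst : pdv (fun _ => c) p = 0 := by simp [pdv]

theorem pdvFst : pdv (fun q : ℝ × ℝ => q.1) p = 0 := by simp [pdv, fderiv_fst]
theorem pdvSnd : pdv (fun q : ℝ × ℝ => q.2) p = 1 := by simp [pdv, fderiv_snd]

end Stmt17Aux

open Stmt17Aux in
/-- Taylor coefficients (partial derivatives at the origin) of the augmented distance
squared function `Φ(u,v,x,y,z,t) = -(1/2)(‖(x,y,z)-g(u,v)‖² - t²)` for a Monge form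
surface `g(u,v) = (u,v,f(u,v))`. -/
theorem stmt17
    (f : ℝ × ℝ → ℝ) (hf : ContDiff ℝ (⊤ : ℕ∞) f)
    (k1 k2 a30 a21 a12 a03 a40 a31 a22 a13 a04 a50 a05 : ℝ)
    (h00 : f 0 = 0) (h10 : pdu f 0 = 0) (h01 : pdv f 0 = 0)
    (h20 : pdu (pdu f) 0 = k1) (h11 : pdv (pdu f) 0 = 0) (h02 : pdv (pdv f) 0 = k2)
    (h30 : pdu (pdu (pdu f)) 0 = a30) (h21 : pdv (pdu (pdu f)) 0 = a21)
    (h12 : pdv (pdv (pdu f)) 0 = a12) (h03 : pdv (pdv (pdv f)) 0 = a03)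
    (h40 : pdu (pdu (pdu (pdu f))) 0 = a40)
    (h31 : pdv (pdu (pdu (pdu f))) 0 = a31)
    (h22 : pdv (pdv (pdu (pdu f))) 0 = a22)
    (h13 : pdv (pdv (pdv (pdu f))) 0 = a13)
    (h04 : pdv (pdv (pdv (pdv f))) 0 = a04)
    (h50 : pdu (pdu (pdu (pdu (pdu f)))) 0 = a50)
    (h05 : pdv (pdv (pdv (pdv (pdv f)))) 0 = a05)
    (x y z t : ℝ) (φ : ℝ × ℝ → ℝ)
    (hφ : φ = fun p : ℝ × ℝ =>
      -(1/2) * ((x - p.1)^2 + (y - p.2)^2 + (z - f p)^2 - t^2)) :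
    φ 0 = (t^2 - x^2 - y^2 - z^2) / 2 ∧
    pdu φ 0 = x ∧ pdv φ 0 = y ∧
    pdu (pdu φ) 0 = k1 * z - 1 ∧ pdv (pdu φ) 0 = 0 ∧ pdv (pdv φ) 0 = k2 * z - 1 ∧
    pdu (pdu (pdu φ)) 0 = a30 * z ∧ pdv (pdu (pdu φ)) 0 = a21 * z ∧
    pdv (pdv (pdu φ)) 0 = a12 * z ∧ pdv (pdv (pdv φ)) 0 = a03 * z ∧
    pdu (pdu (pdu (pdu φ))) 0 = a40 * z - 3 * k1 ^ 2 ∧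
    pdv (pdu (pdu (pdu φ))) 0 = a31 * z ∧
    pdv (pdv (pdu (pdu φ))) 0 = a22 * z - k1 * k2 ∧
    pdv (pdv (pdv (pdu φ))) 0 = a13 * z ∧
    pdv (pdv (pdv (pdv φ))) 0 = a04 * z - 3 * k2 ^ 2 ∧
    pdu (pdu (pdu (pdu (pdu φ)))) 0 = a50 * z - 10 * k1 * a30 ∧
    pdv (pdv (pdv (pdv (pdv φ)))) 0 = a05 * z - 10 * k2 * a03 := by
  -- Smoothness / differentiability of all the derivative functions we need
  have cu1 : ContDiff ℝ (⊤ : ℕ∞) (pdu f) := pduContDiff hf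
  have cu2 : ContDiff ℝ (⊤ : ℕ∞) (pdu (pdu f)) := pduContDiff cu1
  have cu3 : ContDiff ℝ (⊤ : ℕ∞) (pdu (pdu (pdu f))) := pduContDiff cu2
  have cu4 : ContDiff ℝ (⊤ : ℕ∞) (pdu (pdu (pdu (pdu f)))) := pduContDiff cu3
  have cv1 : ContDiff ℝ (⊤ : ℕ∞) (pdv f) := pdvContDiff hf
  have cv2 : ContDiff ℝ (⊤ : ℕ∞) (pdv (pdv f)) := pdvContDiff cv1
  have cv3 : ContDiff ℝ (⊤ : ℕ∞) (pdv (pdv (pdv f))) := pdvContDiff cv2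
  have cv4 : ContDiff ℝ (⊤ : ℕ∞) (pdv (pdv (pdv (pdv f)))) := pdvContDiff cv3
  have cw11 : ContDiff ℝ (⊤ : ℕ∞) (pdv (pdu f)) := pdvContDiff cu1
  have cw12 : ContDiff ℝ (⊤ : ℕ∞) (pdv (pdv (pdu f))) := pdvContDiff cw11
  have cw21 : ContDiff ℝ (⊤ : ℕ∞) (pdv (pdu (pdu f))) := pdvContDiff cu2
  have d0 : Differentiable ℝ f := hf.differentiable (by simp)
  have du1 : Differentiable ℝ (pdu f) := cu1.differentiable (by simp)
  have du2 : Differentiable ℝ (pdu (pdu f)) := cu2.differentiable (by simp)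
  have du3 : Differentiable ℝ (pdu (pdu (pdu f))) := cu3.differentiable (by simp)
  have du4 : Differentiable ℝ (pdu (pdu (pdu (pdu f)))) := cu4.differentiable (by simp)
  have dv1 : Differentiable ℝ (pdv f) := cv1.differentiable (by simp)
  have dv2 : Differentiable ℝ (pdv (pdv f)) := cv2.differentiable (by simp)
  have dv3 : Differentiable ℝ (pdv (pdv (pdv f))) := cv3.differentiable (by simp)
  have dv4 : Differentiable ℝ (pdv (pdv (pdv (pdv f)))) := cv4.differentiable (by simp)
  have dw11 : Differentiable ℝ (pdv (pdu f)) := cw11.differentiable (by simp)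
  have dw12 : Differentiable ℝ (pdv (pdv (pdu f))) := cw12.differentiable (by simp)
  have dw21 : Differentiable ℝ (pdv (pdu (pdu f))) := cw21.differentiable (by simp)
  -- a product form of φ
  have hφ' : φ = fun p : ℝ × ℝ =>
      (-(1/2)) * ((x - p.1) * (x - p.1)) + ((-(1/2)) * ((y - p.2) * (y - p.2))
        + ((-(1/2)) * ((z - f p) * (z - f p)) + (1/2) * (t * t))) := by
    rw [hφ]; funext p; ring
  -- first derivatives
  have E1 : pdu φ = fun p => x - p.1 + (z - f p) * pdu f p := by
    rw [hφ']; funext p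
    simp (disch := fun_prop) only [pduAdd, pduSub, pduMul, pduNeg, pduConst, pduFst, pduSnd]
    ring
  have G1 : pdv φ = fun p => y - p.2 + (z - f p) * pdv f p := by
    rw [hφ']; funext p
    simp (disch := fun_prop) only [pdvAdd, pdvSub, pdvMul, pdvNeg, pdvConst, pdvFst, pdvSnd]
    ring
  -- pure u chain
  have E2 : pdu (pdu φ) = fun p =>
      -1 - pdu f p * pdu f p + (z - f p) * pdu (pdu f) p := by
    rw [E1]; funext p
    simp (disch := fun_prop) only [pduAdd, pduSub, pduMul, pduNeg, pduConst, pduFst, pduSnd]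
    ring
  have E3 : pdu (pdu (pdu φ)) = fun p =>
      -3 * (pdu f p * pdu (pdu f) p) + (z - f p) * pdu (pdu (pdu f)) p := by
    rw [E2]; funext p
    simp (disch := fun_prop) only [pduAdd, pduSub, pduMul, pduNeg, pduConst, pduFst, pduSnd]
    ring
  have E4 : pdu (pdu (pdu (pdu φ))) = fun p =>
      -3 * (pdu (pdu f) p * pdu (pdu f) p) - 4 * (pdu f p * pdu (pdu (pdu f)) p)
        + (z - f p) * pdu (pdu (pdu (pdu f))) p := by
    rw [E3]; funext p
    simp (disch := fun_prop) only [pduAdd, pduSub, pduMul, pduNeg, pduConst, pduFst, pduSnd]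
    ring
  have E5 : pdu (pdu (pdu (pdu (pdu φ)))) = fun p =>
      -10 * (pdu (pdu f) p * pdu (pdu (pdu f)) p)
        - 5 * (pdu f p * pdu (pdu (pdu (pdu f))) p)
        + (z - f p) * pdu (pdu (pdu (pdu (pdu f)))) p := by
    rw [E4]; funext p
    simp (disch := fun_prop) only [pduAdd, pduSub, pduMul, pduNeg, pduConst, pduFst, pduSnd]
    ring
  -- pure v chain
  have G2 : pdv (pdv φ) = fun p =>
      -1 - pdv f p * pdv f p + (z - f p) * pdv (pdv f) p := by
    rw [G1]; funext p
    simp (disch := fun_prop) only [pdvAdd, pdvSub, pdvMul, pdvNeg, pdvConst, pdvFst, pdvSnd]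
    ring
  have G3 : pdv (pdv (pdv φ)) = fun p =>
      -3 * (pdv f p * pdv (pdv f) p) + (z - f p) * pdv (pdv (pdv f)) p := by
    rw [G2]; funext p
    simp (disch := fun_prop) only [pdvAdd, pdvSub, pdvMul, pdvNeg, pdvConst, pdvFst, pdvSnd]
    ring
  have G4 : pdv (pdv (pdv (pdv φ))) = fun p =>
      -3 * (pdv (pdv f) p * pdv (pdv f) p) - 4 * (pdv f p * pdv (pdv (pdv f)) p)
        + (z - f p) * pdv (pdv (pdv (pdv f))) p := by
    rw [G3]; funext p
    simp (disch := fun_prop) only [pdvAdd, pdvSub, pdvMul, pdvNeg, pdvConst, pdvFst, pdvSnd]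
    ring
  have G5 : pdv (pdv (pdv (pdv (pdv φ)))) = fun p =>
      -10 * (pdv (pdv f) p * pdv (pdv (pdv f)) p)
        - 5 * (pdv f p * pdv (pdv (pdv (pdv f))) p)
        + (z - f p) * pdv (pdv (pdv (pdv (pdv f)))) p := by
    rw [G4]; funext p
    simp (disch := fun_prop) only [pdvAdd, pdvSub, pdvMul, pdvNeg, pdvConst, pdvFst, pdvSnd]
    ring
  -- mixed derivatives
  have M11 : pdv (pdu φ) = fun p =>
      -(pdv f p * pdu f p) + (z - f p) * pdv (pdu f) p := by
    rw [E1]; funext p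
    simp (disch := fun_prop) only [pdvAdd, pdvSub, pdvMul, pdvNeg, pdvConst, pdvFst, pdvSnd]
    ring
  have M12 : pdv (pdv (pdu φ)) = fun p =>
      -(pdv (pdv f) p * pdu f p) - 2 * (pdv f p * pdv (pdu f) p)
        + (z - f p) * pdv (pdv (pdu f)) p := by
    rw [M11]; funext p
    simp (disch := fun_prop) only [pdvAdd, pdvSub, pdvMul, pdvNeg, pdvConst, pdvFst, pdvSnd]
    ring
  have M13 : pdv (pdv (pdv (pdu φ))) = fun p =>
      -(pdv (pdv (pdv f)) p * pdu f p) - 3 * (pdv (pdv f) p * pdv (pdu f) p)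
        - 3 * (pdv f p * pdv (pdv (pdu f)) p)
        + (z - f p) * pdv (pdv (pdv (pdu f))) p := by
    rw [M12]; funext p
    simp (disch := fun_prop) only [pdvAdd, pdvSub, pdvMul, pdvNeg, pdvConst, pdvFst, pdvSnd]
    ring
  have M21 : pdv (pdu (pdu φ)) = fun p =>
      -2 * (pdu f p * pdv (pdu f) p) - pdv f p * pdu (pdu f) p
        + (z - f p) * pdv (pdu (pdu f)) p := by
    rw [E2]; funext p
    simp (disch := fun_prop) only [pdvAdd, pdvSub, pdvMul, pdvNeg, pdvConst, pdvFst, pdvSnd]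
    ring
  have M22 : pdv (pdv (pdu (pdu φ))) = fun p =>
      -2 * (pdv (pdu f) p * pdv (pdu f) p) - 2 * (pdu f p * pdv (pdv (pdu f)) p)
        - pdv (pdv f) p * pdu (pdu f) p - 2 * (pdv f p * pdv (pdu (pdu f)) p)
        + (z - f p) * pdv (pdv (pdu (pdu f))) p := by
    rw [M21]; funext p
    simp (disch := fun_prop) only [pdvAdd, pdvSub, pdvMul, pdvNeg, pdvConst, pdvFst, pdvSnd]
    ring
  have M31 : pdv (pdu (pdu (pdu φ))) = fun p =>
      -3 * (pdv (pdu f) p * pdu (pdu f) p) - 3 * (pdu f p * pdv (pdu (pdu f)) p)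
        - pdv f p * pdu (pdu (pdu f)) p
        + (z - f p) * pdv (pdu (pdu (pdu f))) p := by
    rw [E3]; funext p
    simp (disch := fun_prop) only [pdvAdd, pdvSub, pdvMul, pdvNeg, pdvConst, pdvFst, pdvSnd]
    ring
  refine ⟨?_, ?_, ?_, ?_, ?_, ?_, ?_, ?_, ?_, ?_, ?_, ?_, ?_, ?_, ?_, ?_, ?_⟩
  · rw [hφ]; simp only [Prod.fst_zero, Prod.snd_zero, h00]; ring
  · rw [E1]; simp only [Prod.fst_zero, h00, h10]; ring
  · rw [G1]; simp only [Prod.snd_zero, h00, h01]; ring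
  · rw [E2]; simp only [h00, h10, h20]; ring
  · rw [M11]; simp only [h00, h10, h01, h11]; ring
  · rw [G2]; simp only [h00, h01, h02]; ring
  · rw [E3]; simp only [h00, h10, h20, h30]; ring
  · rw [M21]; simp only [h00, h10, h01, h11, h20, h21]; ring
  · rw [M12]; simp only [h00, h10, h01, h11, h02, h12]; ring
  · rw [G3]; simp only [h00, h01, h02, h03]; ring
  · rw [E4]; simp only [h00, h10, h20, h30, h40]; ring
  · rw [M31]; simp only [h00, h10, h01, h11, h20, h21, h30, h31]; ring
  · rw [M22]; simp only [h00, h10, h01, h11, h20, h02, h21, h12, h22]; ring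
  · rw [M13]; simp only [h00, h10, h01, h11, h02, h12, h03, h13]; ring
  · rw [G4]; simp only [h00, h01, h02, h03, h04]; ring
  · rw [E5]; simp only [h00, h10, h20, h30, h40, h50]; ring
  · rw [G5]; simp only [h00, h01, h02, h03, h04, h05]; ring
end
end
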